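/- Let r ∈ ℚ, let I ⊆ D_{r-1} be a nonempty open set, and let d : ℝ → ℝ be a ℚ-homogeneous function. If d(x^r) = r·x^{r-1}·d(x) holds for all x ∈ I, then d(x^r) = r·x^{r-1}·d(x) holds for all x ∈ D_{r-1}. -/

import Mathlib

/-- The domain `D_r` of the power function `x ↦ x^r` for a rational exponent `r = m/n`
(in lowest terms, `n > 0`). -/
def qdom (r : ℚ) : Set ℝ :=
  if Odd r.den then
    (if 0 ≤ r.num then Set.univ else {(0 : ℝ)}ᶜ)
  else
    (if 0 ≤ r.num then Set.Ici 0 else Set.Ioi 0)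

/-- The real power function `x ↦ x^r` with rational exponent `r = m/n` (in lowest terms);
for `x < 0` (and `n` odd) it is the real `n`-th root of `x^m`. -/
noncomputable def qpow (x : ℝ) (r : ℚ) : ℝ :=
  if 0 ≤ x then x ^ (r : ℝ)
  else if Odd r.num then -((-x) ^ (r : ℝ)) else (-x) ^ (r : ℝ)

lemma pos_core (r : ℚ) (s x : ℝ) (hs : 0 < s) (hx : 0 ≤ x) :
    (s ^ r.den * x) ^ (r : ℝ) = s ^ r.num * x ^ (r : ℝ) := by
  rw [Real.mul_rpow (pow_nonneg hs.le _) hx]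
  congr 1
  rw [← Real.rpow_natCast s r.den, ← Real.rpow_mul hs.le, ← Real.rpow_intCast s r.num]
  congr 1
  rw [Rat.cast_def]
  field_simp

lemma qpow_pos_smul (r : ℚ) (s x : ℝ) (hs : 0 < s) :
    qpow (s ^ r.den * x) r = s ^ r.num * qpow x r := by
  rcases le_or_gt 0 x with hx | hx
  · have h1 : 0 ≤ s ^ r.den * x := mul_nonneg (pow_nonneg hs.le _) hx
    rw [qpow, qpow, if_pos h1, if_pos hx, pos_core r s x hs hx]
  · have h1 : s ^ r.den * x < 0 := mul_neg_of_pos_of_neg (pow_pos hs _) hx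
    rw [qpow, qpow, if_neg (not_le.2 h1), if_neg (not_le.2 hx)]
    have h2 : -(s ^ r.den * x) = s ^ r.den * (-x) := by ring
    rw [h2, pos_core r s (-x) hs (neg_nonneg.2 hx.le)]
    split_ifs <;> ring

lemma qpow_neg_arg (r : ℚ) (x : ℝ) :
    qpow (-x) r = if Odd r.num then -qpow x r else qpow x r := by
  rcases lt_trichotomy x 0 with hx | hx | hx
  · rw [qpow, qpow, if_pos (by linarith), if_neg (not_le.2 hx)]
    split_ifs <;> ring
  · subst hx
    by_cases hm : Odd r.num
    · have hr0 : r ≠ 0 := by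
        intro h; rw [h] at hm; simp at hm
      have hz : qpow 0 r = 0 := by
        rw [qpow, if_pos le_rfl, Real.zero_rpow (by exact_mod_cast hr0)]
      rw [neg_zero, hz, if_pos hm, neg_zero]
    · rw [neg_zero, if_neg hm]
  · rw [qpow, qpow, if_neg (by linarith), if_pos hx.le, neg_neg]

lemma qpow_scale (r : ℚ) (s x : ℝ) (hs : s ≠ 0) (hcond : 0 < s ∨ Odd r.den) :
    qpow (s ^ r.den * x) r = s ^ r.num * qpow x r := by
  rcases hs.lt_or_gt with hs' | hs'
  · have hodd : Odd r.den := by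
      rcases hcond with h | h
      · exact absurd h (by linarith)
      · exact h
    set u : ℝ := -s with hu
    have hu0 : 0 < u := by rw [hu]; linarith
    have h1 : s ^ r.den = -(u ^ r.den) := by
      rw [hu, hodd.neg_pow, neg_neg]
    have h2 : s ^ r.den * x = u ^ r.den * (-x) := by rw [h1]; ring
    rw [h2, qpow_pos_smul r u (-x) hu0, qpow_neg_arg]
    have h3 : s ^ r.num = if Odd r.num then -(u ^ r.num) else u ^ r.num := by
      rw [hu]
      split_ifs with hm
      · rw [hm.neg_zpow, neg_neg]
      · rw [((Int.even_or_odd r.num).resolve_right hm).neg_zpow]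
    rw [h3]
    split_ifs <;> ring
  · exact qpow_pos_smul r s x hs'

lemma exists_rat_mem_open {U : Set ℝ} (hU : IsOpen U) (hne : U.Nonempty) :
    ∃ q : ℚ, (q : ℝ) ∈ U :=
  DenseRange.exists_mem_open Rat.denseRange_cast hU hne

lemma root_pos {c : ℝ} (hc : 0 < c) (n : ℕ) (hn : n ≠ 0) :
    ∃ t0 : ℝ, 0 < t0 ∧ t0 ^ n = c := by
  refine ⟨c ^ ((n : ℝ)⁻¹), Real.rpow_pos_of_pos hc _, ?_⟩
  rw [← Real.rpow_natCast (c ^ ((n : ℝ)⁻¹)) n, ← Real.rpow_mul hc.le,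
    inv_mul_cancel₀ (Nat.cast_ne_zero.2 hn), Real.rpow_one]

/-- If a `ℚ`-homogeneous function `d` satisfies `d(x^r) = r x^{r-1} d(x)` on a nonempty
open subset of `D_{r-1}`, then it satisfies it on all of `D_{r-1}`. -/
theorem stmt_4 (r : ℚ) (I : Set ℝ) (hIne : I.Nonempty) (hIopen : IsOpen I)
    (hI : I ⊆ qdom (r - 1)) (d : ℝ → ℝ)
    (hhom : ∀ (q : ℚ) (x : ℝ), d (q * x) = q * d x)
    (h : ∀ x ∈ I, d (qpow x r) = (r : ℝ) * qpow x (r - 1) * d x) :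
    ∀ x ∈ qdom (r - 1), d (qpow x r) = (r : ℝ) * qpow x (r - 1) * d x := by
  -- basic facts about `r - 1`
  have hcop : (r.num - r.den).natAbs.Coprime r.den := by
    have h1 : IsCoprime (r.num) (r.den : ℤ) := Int.isCoprime_iff_gcd_eq_one.2 r.reduced
    have h2 := h1.add_mul_left_left (-1)
    rw [Int.isCoprime_iff_gcd_eq_one] at h2
    simpa [mul_neg_one, ← sub_eq_add_neg, Int.gcd] using h2
  set q0 : ℚ := ⟨r.num - r.den, r.den, r.den_nz, hcop⟩ with hq0def
  have hq0 : r - 1 = q0 := by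
    have : (q0 : ℚ) = ((r.num - r.den : ℤ) : ℚ) / ((r.den : ℤ) : ℚ) := by
      rw [hq0def, Rat.mk_eq_divInt, Rat.divInt_eq_div]
    rw [this]
    push_cast
    rw [sub_div, Rat.num_div_den]
    field_simp
  have hden : (r - 1).den = r.den := by rw [hq0]
  have hnum : (r - 1).num = r.num - r.den := by rw [hq0]
  have hd0 : d 0 = 0 := by simpa using hhom 0 0
  intro x hx
  by_cases hx0 : x = 0
  · -- the zero case
    subst hx0
    have hnn : 0 ≤ (r - 1).num := by
      rw [qdom] at hx
      split_ifs at hx with h1 h2 h3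
      · exact h2
      · exact absurd rfl hx
      · exact h3
      · exact absurd hx (by simp)
    have hr0 : r ≠ 0 := by
      intro h'
      rw [hnum, h'] at hnn
      norm_num at hnn
    have hz : qpow 0 r = 0 := by
      rw [qpow, if_pos le_rfl, Real.zero_rpow (by exact_mod_cast hr0)]
    rw [hz, hd0, mul_zero]
  · -- nonzero case: move into `I` by a rational scaling
    -- first, find a nonzero element of I
    obtain ⟨y0, hy0⟩ := hIne
    have hyex : ∃ y ∈ I, y ≠ 0 := by
      by_cases hy00 : y0 = 0
      · subst hy00
        rcases Metric.isOpen_iff.1 hIopen 0 hy0 with ⟨ε, hε, hball⟩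
        refine ⟨ε / 2, hball ?_, by positivity⟩
        rw [Metric.mem_ball, Real.dist_eq, sub_zero, abs_of_pos (by positivity)]
        linarith
      · exact ⟨y0, hy0, hy00⟩
    obtain ⟨y, hyI, hy0'⟩ := hyex
    set n := r.den with hn
    have hn0 : n ≠ 0 := r.den_nz
    -- find a rational t with t ≠ 0, (0 < t ∨ Odd n), (t:ℝ)^n * x ∈ I
    have htex : ∃ t : ℚ, (t : ℝ) ≠ 0 ∧ (0 < (t : ℝ) ∨ Odd n) ∧ ((t : ℝ)) ^ n * x ∈ I := by
      by_cases hodd : Odd n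
      · -- odd denominator: full real line available
        set U : Set ℝ := {s : ℝ | s ≠ 0 ∧ s ^ n * x ∈ I} with hU
        have hUopen : IsOpen U := by
          apply IsOpen.inter isOpen_ne
          exact ((continuous_pow n).mul continuous_const).isOpen_preimage I hIopen
        have hUne : U.Nonempty := by
          rcases lt_trichotomy (y / x) 0 with hc | hc | hc
          · obtain ⟨t0, ht0, ht0n⟩ := root_pos (c := -(y / x)) (by linarith) n hn0
            refine ⟨-t0, by intro hcon; rw [neg_eq_zero] at hcon; exact absurd hcon ht0.ne', ?_⟩
            have : (-t0) ^ n = y / x := by rw [hodd.neg_pow, ht0n]; ring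
            rw [this, div_mul_cancel₀ _ hx0]
            exact hyI
          · exact absurd hc (div_ne_zero hy0' hx0)
          · obtain ⟨t0, ht0, ht0n⟩ := root_pos hc n hn0
            refine ⟨t0, ht0.ne', ?_⟩
            rw [ht0n, div_mul_cancel₀ _ hx0]
            exact hyI
        obtain ⟨t, ht⟩ := exists_rat_mem_open hUopen hUne
        exact ⟨t, ht.1, Or.inr hodd, ht.2⟩
      · -- even denominator: everything is positive
        have hpos : ∀ z ∈ qdom (r - 1), z ≠ 0 → 0 < z := by
          intro z hz hz0
          rw [qdom, hden, if_neg hodd] at hz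
          split_ifs at hz with h1
          · exact hz.lt_of_ne' hz0
          · exact hz
        have hxpos : 0 < x := hpos x hx hx0
        have hypos : 0 < y := hpos y (hI hyI) hy0'
        set U : Set ℝ := {s : ℝ | 0 < s ∧ s ^ n * x ∈ I} with hU
        have hUopen : IsOpen U := by
          apply IsOpen.inter isOpen_Ioi
          exact ((continuous_pow n).mul continuous_const).isOpen_preimage I hIopen
        have hUne : U.Nonempty := by
          obtain ⟨t0, ht0, ht0n⟩ := root_pos (c := y / x) (by positivity) n hn0
          refine ⟨t0, ht0, ?_⟩
          rw [ht0n, div_mul_cancel₀ _ hx0]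
          exact hyI
        obtain ⟨t, ht⟩ := exists_rat_mem_open hUopen hUne
        exact ⟨t, ht.1.ne', Or.inl ht.1, ht.2⟩
    obtain ⟨t, ht0, htc, htI⟩ := htex
    set s : ℝ := (t : ℝ) with hs
    have ht0' : t ≠ 0 := fun hc => ht0 (by rw [hs, hc]; simp)
    have heq := h (s ^ n * x) htI
    -- rewrite both qpow's
    have e1 : qpow (s ^ n * x) r = s ^ r.num * qpow x r := qpow_scale r s x ht0 htc
    have e2 : qpow (s ^ n * x) (r - 1) = s ^ (r - 1).num * qpow x (r - 1) := by
      have := qpow_scale (r - 1) s x ht0 (by rwa [hden])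
      rwa [hden] at this
    rw [e1, e2] at heq
    -- use homogeneity to pull out rational factors
    have hhom' : ∀ (k : ℤ) (z : ℝ), d (s ^ k * z) = s ^ k * d z := by
      intro k z
      have := hhom (t ^ k) z
      rw [Rat.cast_zpow] at this
      exact this
    have hhomn : ∀ z : ℝ, d (s ^ n * z) = s ^ n * d z := by
      intro z
      have := hhom' (n : ℤ) z
      rwa [zpow_natCast] at this
    rw [hhom' r.num (qpow x r), hhomn x] at heq
    -- cancel s ^ r.num
    have hsm : s ^ r.num ≠ 0 := zpow_ne_zero _ ht0
    have hpow : s ^ (r.num - (n : ℤ)) * s ^ n = s ^ r.num := by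
      rw [← zpow_natCast s n, ← zpow_add₀ ht0]
      congr 1
      omega
    have hfin : s ^ r.num * d (qpow x r) =
        s ^ r.num * ((r : ℝ) * qpow x (r - 1) * d x) := by
      calc s ^ r.num * d (qpow x r)
          = (r : ℝ) * (s ^ (r.num - (n : ℤ)) * qpow x (r - 1)) * (s ^ n * d x) := by
            rw [heq, hnum]
        _ = (s ^ (r.num - (n : ℤ)) * s ^ n) * ((r : ℝ) * qpow x (r - 1) * d x) := by ring
        _ = s ^ r.num * ((r : ℝ) * qpow x (r - 1) * d x) := by rw [hpow]
    exact mul_left_cancel₀ hsm hfin
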